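/- arXiv:2411.01625 — 3 statements merged into one kernel-verified Lean document; each statement's English description precedes it below -/
import Mathlib

section
/- Let W = (W1, ..., WK) be a vector of independent real-valued random variables and let W' be an i.i.d. copy of W, independent of W. For a square-integrable function f of W and a nonempty subset S of {1,...,K}, the pick-freeze identity holds: E[Var(f(W) | W_{-S})] = (1/2) * E[(f(W) - f(W'_S, W_{-S}))^2], where (W'_S, W_{-S}) denotes the hybrid vector whose coordinates in S come from W' and whose coordinates outside S come from W. -/
open MeasureTheory ProbabilityTheory

/-- Hybrid vector: coordinates in `S` from `w'`, the rest from `w`. -/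
def hybrid {K : ℕ} (S : Finset (Fin K)) (w' w : Fin K → ℝ) : Fin K → ℝ :=
  fun i => if i ∈ S then w' i else w i

/-- The σ-algebra generated by the coordinates of `W` outside `S`. -/
def coordSigma {Ω : Type*} [MeasurableSpace Ω] {K : ℕ} (W : Ω → Fin K → ℝ)
    (S : Finset (Fin K)) : MeasurableSpace Ω :=
  MeasurableSpace.comap (fun ω => fun i : {i : Fin K // i ∉ S} => W ω i) inferInstance

lemma sq_integral_le {γ : Type*} [MeasurableSpace γ] {ν : Measure γ}
    [IsProbabilityMeasure ν] {g : γ → ℝ} (h1 : Integrable g ν)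
    (h2 : Integrable (fun x => g x ^ 2) ν) :
    (∫ x, g x ∂ν) ^ 2 ≤ ∫ x, g x ^ 2 ∂ν := by
  set c := ∫ x, g x ∂ν with hc
  have h0 : 0 ≤ ∫ x, (g x - c) ^ 2 ∂ν := integral_nonneg fun x => sq_nonneg _
  have hexp : ∫ x, (g x - c) ^ 2 ∂ν
      = (∫ x, g x ^ 2 ∂ν) - (2 * c) * c + c ^ 2 := by
    have heq : ∀ x, (g x - c) ^ 2 = g x ^ 2 - (2 * c) * g x + c ^ 2 := fun x => by ring
    simp_rw [heq]
    rw [integral_add ((h2.sub (h1.const_mul (2 * c))).congr ?_) (integrable_const _),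
      integral_sub h2 (h1.const_mul _), integral_const_mul, integral_const,
      probReal_univ, one_smul, ← hc]
    · rfl
  nlinarith [h0, hexp]

lemma integrable_mul_of_sq {γ : Type*} [MeasurableSpace γ] {ν : Measure γ}
    {a b : γ → ℝ} (ha : MemLp a 2 ν) (hb : MemLp b 2 ν) :
    Integrable (fun x => a x * b x) ν := by
  refine Integrable.mono' ((ha.integrable_sq.add hb.integrable_sq).div_const 2)
    (ha.aestronglyMeasurable.mul hb.aestronglyMeasurable)
    (Filter.Eventually.of_forall fun x => ?_)
  have := sq_nonneg (|a x| - |b x|)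
  simp only [Real.norm_eq_abs, abs_mul, Pi.add_apply]
  nlinarith [sq_abs (a x), sq_abs (b x), abs_nonneg (a x), abs_nonneg (b x)]

/-- Pick-freeze identity for Sobol's upper index:
`E[Var(f(W) | W_{-S})] = (1/2) E[(f(W) - f(W'_S, W_{-S}))^2]`. -/
theorem stmt2 {Ω : Type*} [MeasurableSpace Ω] (μ : Measure Ω) [IsProbabilityMeasure μ]
    {K : ℕ} (W W' : Ω → Fin K → ℝ)
    (hW : Measurable W) (hW' : Measurable W')
    (hiW : iIndepFun
      (fun i ω => W ω i) μ)
    (hcopy : μ.map W' = μ.map W)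
    (hindep : IndepFun W W' μ)
    (f : (Fin K → ℝ) → ℝ) (hf : Measurable f)
    (hL2 : MemLp (fun ω => f (W ω)) 2 μ)
    (S : Finset (Fin K)) (hS : S.Nonempty) :
    ∫ ω, (f (W ω) - (μ[fun ω => f (W ω) | coordSigma W S]) ω)^2 ∂μ
      = (1/2) * ∫ ω, (f (W ω) - f (hybrid S (W' ω) (W ω)))^2 ∂μ := by
  classical
  -- restriction maps and merge
  set restr1 : (Fin K → ℝ) → ({i : Fin K // i ∈ S} → ℝ) := fun w i => w i.1 with hrestr1
  set restr2 : (Fin K → ℝ) → ({i : Fin K // i ∉ S} → ℝ) := fun w i => w i.1 with hrestr2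
  set merge : ({i : Fin K // i ∈ S} → ℝ) → ({i : Fin K // i ∉ S} → ℝ) → (Fin K → ℝ) :=
    fun u v i => if hi : i ∈ S then u ⟨i, hi⟩ else v ⟨i, hi⟩ with hmergedef
  have hrestr1_meas : Measurable restr1 :=
    measurable_pi_iff.mpr fun i => measurable_pi_apply _
  have hrestr2_meas : Measurable restr2 :=
    measurable_pi_iff.mpr fun i => measurable_pi_apply _
  have hmerge_meas : Measurable fun p : ({i : Fin K // i ∈ S} → ℝ) × ({i : Fin K // i ∉ S} → ℝ) =>
      merge p.1 p.2 := by
    apply measurable_pi_iff.mpr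
    intro i
    by_cases hi : i ∈ S
    · simpa [hmergedef, hi, Function.comp_def] using (measurable_pi_apply (⟨i, hi⟩ : {i : Fin K // i ∈ S})).comp measurable_fst
    · simpa [hmergedef, hi, Function.comp_def] using (measurable_pi_apply (⟨i, hi⟩ : {i : Fin K // i ∉ S})).comp measurable_snd
  set U : Ω → ({i : Fin K // i ∈ S} → ℝ) := fun ω => restr1 (W ω) with hUdef
  set V : Ω → ({i : Fin K // i ∉ S} → ℝ) := fun ω => restr2 (W ω) with hVdef
  set U' : Ω → ({i : Fin K // i ∈ S} → ℝ) := fun ω => restr1 (W' ω) with hU'def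
  have hU : Measurable U := hrestr1_meas.comp hW
  have hV : Measurable V := hrestr2_meas.comp hW
  have hU' : Measurable U' := hrestr1_meas.comp hW'
  set F : ({i : Fin K // i ∈ S} → ℝ) × ({i : Fin K // i ∉ S} → ℝ) → ℝ :=
    fun p => f (merge p.1 p.2) with hFdef
  have hFmeas : Measurable F := hf.comp hmerge_meas
  have hWeq : ∀ ω, merge (U ω) (V ω) = W ω := by
    intro ω; funext i
    by_cases hi : i ∈ S <;> simp [hmergedef, hUdef, hVdef, hrestr1, hrestr2, hi]
  have hHeq : ∀ ω, merge (U' ω) (V ω) = hybrid S (W' ω) (W ω) := by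
    intro ω; funext i
    by_cases hi : i ∈ S <;> simp [hmergedef, hU'def, hVdef, hrestr1, hrestr2, hybrid, hi]
  -- laws
  set π := μ.map U with hπdef
  set ρ := μ.map V with hρdef
  haveI : IsProbabilityMeasure π := Measure.isProbabilityMeasure_map hU.aemeasurable
  haveI : IsProbabilityMeasure ρ := Measure.isProbabilityMeasure_map hV.aemeasurable
  set M := π.prod ρ with hMdef
  set N := π.prod M with hNdef
  -- independence of U and V
  have hUV : IndepFun U V μ := by
    have base := hiW.indepFun_finset S Sᶜ disjoint_compl_right
      (fun i => (measurable_pi_apply i).comp hW)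
    have hre : Measurable fun (g : (↥(Sᶜ) : Type) → ℝ) (j : {i : Fin K // i ∉ S}) =>
        g ⟨j.1, Finset.mem_compl.mpr j.2⟩ :=
      measurable_pi_iff.mpr fun j => measurable_pi_apply _
    have := base.comp measurable_id hre
    exact this
  set P : Ω → ({i : Fin K // i ∈ S} → ℝ) × ({i : Fin K // i ∉ S} → ℝ) :=
    fun ω => (U ω, V ω) with hPdef
  have hP : Measurable P := hU.prodMk hV
  have hPmap : μ.map P = M := by
    rw [hMdef, hπdef, hρdef]
    exact (indepFun_iff_map_prod_eq_prod_map_map hU.aemeasurable hV.aemeasurable).mp hUV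
  -- U' independent of P, same law as U
  have hU'law : μ.map U' = π := by
    rw [hπdef, hUdef, hU'def]
    show μ.map (restr1 ∘ W') = μ.map (restr1 ∘ W)
    rw [← Measure.map_map hrestr1_meas hW', ← Measure.map_map hrestr1_meas hW, hcopy]
  have hU'P : IndepFun U' P μ := by
    have h1 : IndepFun (restr1 ∘ W') ((fun w => (restr1 w, restr2 w)) ∘ W) μ :=
      hindep.symm.comp hrestr1_meas (hrestr1_meas.prodMk hrestr2_meas)
    exact h1
  set T : Ω → ({i : Fin K // i ∈ S} → ℝ) ×
      (({i : Fin K // i ∈ S} → ℝ) × ({i : Fin K // i ∉ S} → ℝ)) :=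
    fun ω => (U' ω, P ω) with hTdef
  have hT : Measurable T := hU'.prodMk hP
  have hTmap : μ.map T = N := by
    rw [hNdef, ← hU'law, ← hPmap]
    exact (indepFun_iff_map_prod_eq_prod_map_map hU'.aemeasurable hP.aemeasurable).mp hU'P
  -- integrability of F
  have hfW_eq : (fun ω => f (W ω)) = fun ω => F (P ω) := by
    funext ω; rw [hFdef]; simp only [hPdef]; rw [hWeq ω]
  have hF2 : MemLp F 2 M := by
    rw [← hPmap]
    exact (memLp_map_measure_iff hFmeas.aestronglyMeasurable hP.aemeasurable).mpr
      (show MemLp (fun ω => F (P ω)) 2 μ by rw [← hfW_eq]; exact hL2)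
  have hFint : Integrable F M := hF2.integrable one_le_two
  -- the conditional mean function h
  set h : ({i : Fin K // i ∉ S} → ℝ) → ℝ := fun v => ∫ u, F (u, v) ∂π with hhdef
  have hhsm : StronglyMeasurable h := hFmeas.stronglyMeasurable.integral_prod_left'
  have hhmeas : Measurable h := hhsm.measurable
  have hhint : Integrable h ρ := hFint.integral_prod_right
  have hh2 : MemLp h 2 ρ := by
    have hF2int : Integrable (fun p => F p ^ 2) M := hF2.integrable_sq
    have hmint : Integrable (fun v => ∫ u, F (u, v) ^ 2 ∂π) ρ := by
      have := hF2int.integral_prod_right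
      rw [hMdef] at hF2int
      exact hF2int.integral_prod_right
    have hbound : ∀ᵐ v ∂ρ, ‖h v ^ 2‖ ≤ ∫ u, F (u, v) ^ 2 ∂π := by
      have h1 : Integrable F M := hFint
      rw [hMdef] at h1 hF2int
      filter_upwards [h1.prod_left_ae, hF2int.prod_left_ae] with v hv1 hv2
      rw [Real.norm_eq_abs, abs_of_nonneg (sq_nonneg _)]
      exact sq_integral_le hv1 hv2
    have hsq : Integrable (fun v => h v ^ 2) ρ :=
      Integrable.mono' hmint ((hhmeas.pow_const 2).aestronglyMeasurable) hbound
    exact (memLp_two_iff_integrable_sq hhsm.aestronglyMeasurable).mpr hsq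
  -- h ∘ V is the conditional expectation
  have hsigma : coordSigma W S = MeasurableSpace.comap V inferInstance := rfl
  have hm_le : coordSigma W S ≤ (inferInstance : MeasurableSpace Ω) := by
    rw [hsigma]; exact hV.comap_le
  have hhV_int : Integrable (fun ω => h (V ω)) μ := by
    have h1 : Integrable h (μ.map V) := by rwa [← hρdef]
    exact (integrable_map_measure hhsm.aestronglyMeasurable hV.aemeasurable).mp h1
  have hce : (fun ω => h (V ω)) =ᵐ[μ] μ[fun ω => f (W ω) | coordSigma W S] := by
    haveI : SigmaFinite (μ.trim hm_le) := by
      haveI : IsFiniteMeasure (μ.trim hm_le) := isFiniteMeasure_trim hm_le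
      infer_instance
    refine ae_eq_condExp_of_forall_setIntegral_eq hm_le (hL2.integrable one_le_two)
      (fun s _ _ => hhV_int.integrableOn) (fun s hs hμs => ?_) ?_
    · rw [hsigma] at hs
      obtain ⟨A, hA, rfl⟩ := hs
      have e1 : ∫ x in V ⁻¹' A, h (V x) ∂μ = ∫ v in A, h v ∂ρ := by
        rw [hρdef]
        exact (setIntegral_map hA hhsm.aestronglyMeasurable hV.aemeasurable).symm
      have epre : V ⁻¹' A = P ⁻¹' (Set.univ ×ˢ A) := by
        ext ω; simp [hPdef]
      have e2 : ∫ x in V ⁻¹' A, f (W x) ∂μ = ∫ p in Set.univ ×ˢ A, F p ∂M := by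
        have hpt : ∀ x, f (W x) = F (P x) := fun x => congrFun hfW_eq x
        simp only [hpt]
        rw [epre, ← hPmap,
          setIntegral_map (MeasurableSet.univ.prod hA) hFmeas.aestronglyMeasurable
            hP.aemeasurable]
      have hFres : Integrable F (π.prod (ρ.restrict A)) := by
        rw [show π.prod (ρ.restrict A) = (π.prod ρ).restrict (Set.univ ×ˢ A) by
          rw [← Measure.prod_restrict, Measure.restrict_univ]]
        exact (hMdef ▸ hFint).restrict
      have e3 : ∫ p in Set.univ ×ˢ A, F p ∂M = ∫ v in A, h v ∂ρ := by
        rw [hMdef, ← Measure.prod_restrict, Measure.restrict_univ,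
          integral_prod_symm _ hFres]
      rw [e1, e2, e3]
    · apply StronglyMeasurable.aestronglyMeasurable
      have hVm : @Measurable Ω _ (coordSigma W S) _ V := by
        rw [hsigma]; exact measurable_iff_comap_le.mpr le_rfl
      exact (hhmeas.comp hVm).stronglyMeasurable
  -- define centered G
  set G : ({i : Fin K // i ∈ S} → ℝ) × ({i : Fin K // i ∉ S} → ℝ) → ℝ :=
    fun p => F p - h p.2 with hGdef
  have hGmeas : Measurable G := hFmeas.sub (hhmeas.comp measurable_snd)
  have hsnd_map : M.map Prod.snd = ρ := by
    rw [hMdef, Measure.map_snd_prod, measure_univ, one_smul]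
  have hG2 : MemLp G 2 M := by
    refine hF2.sub ?_
    have h1 : MemLp h 2 (M.map Prod.snd) := by rwa [hsnd_map]
    exact (memLp_map_measure_iff hhsm.aestronglyMeasurable
      measurable_snd.aemeasurable).mp h1
  -- key : integral of G over first coordinate vanishes
  have hker : ∀ᵐ v ∂ρ, ∫ u, G (u, v) ∂π = 0 := by
    filter_upwards [hFint.prod_left_ae] with v hv
    rw [hGdef]
    simp only
    rw [integral_sub hv (integrable_const _), integral_const, probReal_univ,
      one_smul, hhdef, sub_self]
  -- LHS = ∫ G² dM
  have hLHS : ∫ ω, (f (W ω) - (μ[fun ω => f (W ω) | coordSigma W S]) ω)^2 ∂μ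
      = ∫ p, (G p)^2 ∂M := by
    have h1 : ∫ ω, (f (W ω) - (μ[fun ω => f (W ω) | coordSigma W S]) ω)^2 ∂μ
        = ∫ ω, (f (W ω) - h (V ω))^2 ∂μ := by
      refine integral_congr_ae (hce.mono fun ω hω => ?_)
      simp only at hω ⊢
      rw [hω]
    have hpt : ∀ ω, G (P ω) = f (W ω) - h (V ω) := by
      intro ω
      have e1 : F (P ω) = f (W ω) := by
        rw [hFdef]; simp only [hPdef]; rw [hWeq ω]
      simp only [hGdef, hPdef] at *
      rw [e1]
    have h2 : ∫ p, (G p)^2 ∂M = ∫ ω, (f (W ω) - h (V ω))^2 ∂μ := by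
      rw [← hPmap, integral_map hP.aemeasurable
        ((hGmeas.pow_const 2).aestronglyMeasurable)]
      exact integral_congr_ae (Filter.Eventually.of_forall fun ω => by
        simp only; rw [hpt ω])
    rw [h1, h2]
  -- RHS integral = 2 ∫ G² dM
  have hRHS : ∫ ω, (f (W ω) - f (hybrid S (W' ω) (W ω)))^2 ∂μ = 2 * ∫ p, (G p)^2 ∂M := by
    -- transfer to the triple product space
    have hg1m : Measurable fun q : ({i : Fin K // i ∈ S} → ℝ) ×
        (({i : Fin K // i ∈ S} → ℝ) × ({i : Fin K // i ∉ S} → ℝ)) => G q.2 :=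
      hGmeas.comp measurable_snd
    have hξm : Measurable fun q : ({i : Fin K // i ∈ S} → ℝ) ×
        (({i : Fin K // i ∈ S} → ℝ) × ({i : Fin K // i ∉ S} → ℝ)) => (q.1, q.2.2) :=
      measurable_fst.prodMk (measurable_snd.comp measurable_snd)
    have hg2m : Measurable fun q : ({i : Fin K // i ∈ S} → ℝ) ×
        (({i : Fin K // i ∈ S} → ℝ) × ({i : Fin K // i ∉ S} → ℝ)) => G (q.1, q.2.2) :=
      hGmeas.comp hξm
    have hsndN : N.map Prod.snd = M := by
      rw [hNdef, Measure.map_snd_prod, measure_univ, one_smul]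
    have hξN : N.map (fun q => (q.1, q.2.2)) = M := by
      have e : (fun q : ({i : Fin K // i ∈ S} → ℝ) ×
          (({i : Fin K // i ∈ S} → ℝ) × ({i : Fin K // i ∉ S} → ℝ)) => (q.1, q.2.2))
          = Prod.map id Prod.snd := by
        funext q; rfl
      rw [e, hNdef, ← Measure.map_prod_map π M measurable_id measurable_snd,
        Measure.map_id, hsnd_map, hMdef]
    have hg1_2 : MemLp (fun q => G q.2) 2 N := by
      have h1 : MemLp G 2 (N.map Prod.snd) := by rwa [hsndN]
      exact (memLp_map_measure_iff hGmeas.aestronglyMeasurable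
        measurable_snd.aemeasurable).mp h1
    have hg2_2 : MemLp (fun q => G (q.1, q.2.2)) 2 N := by
      have h1 : MemLp G 2 (N.map (fun q => (q.1, q.2.2))) := by rwa [hξN]
      exact (memLp_map_measure_iff hGmeas.aestronglyMeasurable hξm.aemeasurable).mp h1
    -- transfer the LHS integral
    have hpt : ∀ ω, (f (W ω) - f (hybrid S (W' ω) (W ω)))^2
        = (G (P ω) - G (U' ω, V ω))^2 := by
      intro ω
      have e1 : F (P ω) = f (W ω) := by
        rw [hFdef]; simp only [hPdef]; rw [hWeq ω]
      have e2 : F (U' ω, V ω) = f (hybrid S (W' ω) (W ω)) := by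
        rw [hFdef]; simp only; rw [hHeq ω]
      simp only [hTdef, hGdef, hPdef] at *
      rw [e1, e2]
      ring
    have htrans : ∫ ω, (f (W ω) - f (hybrid S (W' ω) (W ω)))^2 ∂μ
        = ∫ q, (G q.2 - G (q.1, q.2.2))^2 ∂N := by
      rw [← hTmap, integral_map (f := fun q => (G q.2 - G (q.1, q.2.2))^2) hT.aemeasurable
        (((hg1m.sub hg2m).pow_const 2).aestronglyMeasurable)]
      exact integral_congr_ae (Filter.Eventually.of_forall fun ω => by
        simp only [hTdef]; rw [← hpt ω])
    -- the cross term vanishes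
    have hcross_int : Integrable (fun q => G q.2 * G (q.1, q.2.2)) N :=
      integrable_mul_of_sq hg1_2 hg2_2
    have hcross : ∫ q, G q.2 * G (q.1, q.2.2) ∂N = 0 := by
      rw [hNdef] at hcross_int ⊢
      rw [integral_prod _ hcross_int]
      have hz : ∀ᵐ u' ∂π, ∫ p, G p * G (u', p.2) ∂M = 0 := by
        filter_upwards [hcross_int.prod_right_ae] with u' hu'
        have hu2 : Integrable (fun p => G p * G (u', p.2)) (π.prod ρ) := by
          rw [← hMdef]; exact hu'
        rw [hMdef, integral_prod_symm _ hu2]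
        have hz2 : ∀ᵐ v ∂ρ, ∫ u, G (u, v) * G (u', v) ∂π = 0 :=
          hker.mono fun v hv => by rw [integral_mul_const, hv, zero_mul]
        rw [integral_congr_ae hz2, integral_zero]
      calc ∫ u', ∫ p, G p * G (u', p.2) ∂M ∂π = ∫ (_ : {i : Fin K // i ∈ S} → ℝ), (0:ℝ) ∂π :=
            integral_congr_ae hz
        _ = 0 := integral_zero _ _
    -- expand the square
    have hsq1 : Integrable (fun q => G q.2 ^ 2) N := hg1_2.integrable_sq
    have hsq2 : Integrable (fun q => G (q.1, q.2.2) ^ 2) N := hg2_2.integrable_sq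
    have hexp : ∫ q, (G q.2 - G (q.1, q.2.2))^2 ∂N
        = (∫ q, G q.2 ^ 2 ∂N) - 2 * (∫ q, G q.2 * G (q.1, q.2.2) ∂N)
          + ∫ q, G (q.1, q.2.2) ^ 2 ∂N := by
      have heq : ∀ q : ({i : Fin K // i ∈ S} → ℝ) ×
          (({i : Fin K // i ∈ S} → ℝ) × ({i : Fin K // i ∉ S} → ℝ)),
          (G q.2 - G (q.1, q.2.2))^2
          = G q.2 ^ 2 - 2 * (G q.2 * G (q.1, q.2.2)) + G (q.1, q.2.2) ^ 2 := fun q => by ring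
      simp_rw [heq]
      rw [integral_add ((hsq1.sub (hcross_int.const_mul 2)).congr ?_) hsq2,
        integral_sub hsq1 (hcross_int.const_mul 2), integral_const_mul]
      · rfl
    have ea : ∫ q, G q.2 ^ 2 ∂N = ∫ p, (G p)^2 ∂M := by
      rw [← hsndN, integral_map measurable_snd.aemeasurable
        ((hGmeas.pow_const 2).aestronglyMeasurable)]
    have eb : ∫ q, G (q.1, q.2.2) ^ 2 ∂N = ∫ p, (G p)^2 ∂M := by
      rw [← hξN, integral_map hξm.aemeasurable ((hGmeas.pow_const 2).aestronglyMeasurable)]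
    rw [htrans, hexp, ea, eb, hcross]
    ring
  rw [hLHS, hRHS]; ring
end

section
/- (Hoeffding orthogonality) Let W = (W1,...,WK) be independent random variables and f square-integrable, with ANOVA components f_S defined inductively by f_emptyset = E[f(W)] and f_S(w_S) = E[f(W) - sum over strict subsets S' of S of f_{S'}(W_{S'}) | W_S = w_S]. Then for any two distinct subsets S and S' of {1,...,K}, E[f_S(W_S) * f_{S'}(W_{S'})] = 0. -/
open MeasureTheory ProbabilityTheory Finset

/-- The σ-algebra generated by the coordinates of `W` inside `S`. -/
def coordSigmaIn {Ω : Type*} [MeasurableSpace Ω] {K : ℕ} (W : Ω → Fin K → ℝ)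
    (S : Finset (Fin K)) : MeasurableSpace Ω :=
  MeasurableSpace.comap (fun ω => fun i : {i : Fin K // i ∈ S} => W ω i) inferInstance

/-- The ANOVA component `f_S(W_S)`, defined inductively by
`f_S(w_S) = E[f(W) - ∑_{S' ⊊ S} f_{S'}(W_{S'}) | W_S = w_S]`. -/
noncomputable def anovaComp {Ω : Type*} [MeasurableSpace Ω] (μ : Measure Ω) {K : ℕ}
    (W : Ω → Fin K → ℝ) (f : (Fin K → ℝ) → ℝ) (S : Finset (Fin K)) : Ω → ℝ :=
  μ[ (fun ω => f (W ω) -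
      ∑ S' ∈ (S.powerset.erase S).attach, anovaComp μ W f S'.1 ω) | coordSigmaIn W S ]
termination_by S.card
decreasing_by
  have h1 := Finset.mem_erase.mp S'.2
  exact Finset.card_lt_card (lt_of_le_of_ne (Finset.mem_powerset.mp h1.2) h1.1)

lemma memL2_integrable_mul {Ω : Type*} [m0 : MeasurableSpace Ω] {μ : Measure Ω}
    {g h : Ω → ℝ} (hg : MemLp g 2 μ) (hh : MemLp h 2 μ) :
    Integrable (fun ω => g ω * h ω) μ := by
  have h1 := L2.integrable_inner (𝕜 := ℝ) (hg.toLp g) (hh.toLp h)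
  refine h1.congr ?_
  filter_upwards [hg.coeFn_toLp, hh.coeFn_toLp] with ω e1 e2
  simp [e1, e2, RCLike.inner_apply, mul_comm]

lemma memL2_condexp {Ω : Type*} {m : MeasurableSpace Ω} [m0 : MeasurableSpace Ω] {μ : Measure Ω}
    [IsProbabilityMeasure μ] (hm : m ≤ m0) {g : Ω → ℝ} (hg : MemLp g 2 μ) :
    MemLp (μ[g|m]) 2 μ := by
  have hgi : Integrable g μ := hg.integrable one_le_two
  have h1 : ((condExpL2 ℝ ℝ hm (hg.toLp g) : Lp ℝ 2 μ) : Ω → ℝ) =ᵐ[μ] μ[g|m] := by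
    refine ae_eq_condExp_of_forall_setIntegral_eq hm hgi
      (fun s _ _ => ((Lp.memLp _).integrable one_le_two).integrableOn)
      (fun s hs hμs => ?_) (aestronglyMeasurable_condExpL2 hm _)
    rw [integral_condExpL2_eq hm (hg.toLp g) hs hμs.ne]
    exact setIntegral_congr_ae (hm s hs) (hg.coeFn_toLp.mono fun x hx _ => hx)
  exact (Lp.memLp _).ae_eq h1


lemma condexp_indep_sup {Ω : Type*} {m₁ m₂ m₃ : MeasurableSpace Ω} [m0 : MeasurableSpace Ω]
    {μ : Measure Ω} [IsProbabilityMeasure μ] (hm₁ : m₁ ≤ m0) (hm₃ : m₃ ≤ m0)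
    (hm₂₁ : m₂ ≤ m₁) (hindep : Indep m₁ m₃ μ) {X : Ω → ℝ}
    (hXi : Integrable X μ) (hXm : StronglyMeasurable[m₁] X) :
    μ[X | m₂ ⊔ m₃] =ᵐ[μ] μ[X | m₂] := by
  have hm₂ : m₂ ≤ m0 := hm₂₁.trans hm₁
  have hm : m₂ ⊔ m₃ ≤ m0 := sup_le hm₂ hm₃
  have key : ∀ V : Ω → ℝ, Integrable V μ → StronglyMeasurable[m₁] V →
      ∀ B C : Set Ω, MeasurableSet[m₂] B → MeasurableSet[m₃] C →
      ∫ x in B ∩ C, V x ∂μ = (∫ x in B, V x ∂μ) * (μ C).toReal := by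
    intro V hVi hVm B C hB hC
    have hBm : MeasurableSet[m₁] B := hm₂₁ _ hB
    set Y : Ω → ℝ := fun x => V x * B.indicator (fun _ => (1:ℝ)) x with hYdef
    set Z : Ω → ℝ := C.indicator (fun _ => (1:ℝ)) with hZdef
    have hYm : StronglyMeasurable[m₁] Y := hVm.mul (stronglyMeasurable_const.indicator hBm)
    have hZm : StronglyMeasurable[m₃] Z := stronglyMeasurable_const.indicator hC
    have hYZ : IndepFun Y Z μ := by
      rw [IndepFun_iff_Indep]
      exact indep_of_indep_of_le_left
        (indep_of_indep_of_le_right hindep hZm.measurable.comap_le) hYm.measurable.comap_le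
    have h1 : ∫ x in B ∩ C, V x ∂μ = ∫ x, Y x * Z x ∂μ := by
      rw [← integral_indicator ((hm₂ _ hB).inter (hm₃ _ hC))]
      congr 1; funext x
      by_cases hxB : x ∈ B <;> by_cases hxC : x ∈ C <;>
        simp [Y, Z, Set.indicator, hxB, hxC]
    have h2 : ∫ x, Y x ∂μ = ∫ x in B, V x ∂μ := by
      rw [← integral_indicator (hm₂ _ hB)]
      congr 1; funext x
      by_cases hxB : x ∈ B <;> simp [Y, Set.indicator, hxB]
    have h3 : ∫ x, Z x ∂μ = (μ C).toReal := by
      rw [hZdef, integral_indicator (hm₃ _ hC)]; simp [Measure.real]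
    rw [h1, hYZ.integral_fun_mul_eq_mul_integral (hYm.mono hm₁).aestronglyMeasurable
      (hZm.mono hm₃).aestronglyMeasurable, h2, h3]
  have hX2 : StronglyMeasurable[m₂] (μ[X|m₂]) := stronglyMeasurable_condExp
  refine (ae_eq_condExp_of_forall_setIntegral_eq hm hXi
    (fun s _ _ => integrable_condExp.integrableOn) (fun s hs _ => ?_)
    ((hX2.mono (le_sup_left : m₂ ≤ m₂ ⊔ m₃)).aestronglyMeasurable)).symm
  have hgen : (m₂ ⊔ m₃ : MeasurableSpace Ω) = MeasurableSpace.generateFrom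
      {u : Set Ω | ∃ B C : Set Ω, MeasurableSet[m₂] B ∧ MeasurableSet[m₃] C ∧ u = B ∩ C} := by
    apply le_antisymm
    · refine sup_le ?_ ?_ <;> intro u hu <;> apply MeasurableSpace.measurableSet_generateFrom
      · exact ⟨u, Set.univ, hu, MeasurableSet.univ, (Set.inter_univ u).symm⟩
      · exact ⟨Set.univ, u, MeasurableSet.univ, hu, (Set.univ_inter u).symm⟩
    · refine MeasurableSpace.generateFrom_le ?_
      rintro u ⟨B, C, hB, hC, rfl⟩
      exact ((le_sup_left : m₂ ≤ m₂ ⊔ m₃) _ hB).inter ((le_sup_right : m₃ ≤ m₂ ⊔ m₃) _ hC)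
  have hpi : IsPiSystem {u : Set Ω | ∃ B C : Set Ω,
      MeasurableSet[m₂] B ∧ MeasurableSet[m₃] C ∧ u = B ∩ C} := by
    rintro u ⟨B1, C1, hB1, hC1, rfl⟩ v ⟨B2, C2, hB2, hC2, rfl⟩ -
    exact ⟨B1 ∩ B2, C1 ∩ C2, hB1.inter hB2, hC1.inter hC2, Set.inter_inter_inter_comm _ _ _ _⟩
  refine MeasurableSpace.induction_on_inter (m := m₂ ⊔ m₃)
    (C := fun t _ => ∫ x in t, (μ[X|m₂]) x ∂μ = ∫ x in t, X x ∂μ) hgen hpi (by simp) ?_ ?_ ?_ _ hs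
  · rintro u ⟨B, C, hB, hC, rfl⟩
    rw [key X hXi hXm B C hB hC, key (μ[X|m₂]) integrable_condExp (hX2.mono hm₂₁) B C hB hC,
      setIntegral_condExp hm₂ hXi hB]
  · intro t ht h
    have h1 := integral_add_compl (hm _ ht) (integrable_condExp : Integrable (μ[X|m₂]) μ)
    have h2 := integral_add_compl (hm _ ht) hXi
    have h3 : ∫ x, (μ[X|m₂]) x ∂μ = ∫ x, X x ∂μ := integral_condExp hm₂
    linarith
  · intro g hd hgm h
    rw [integral_iUnion (fun i => hm _ (hgm i)) hd integrable_condExp.integrableOn,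
      integral_iUnion (fun i => hm _ (hgm i)) hd hXi.integrableOn]
    exact tsum_congr h

-- coordSigmaIn lemmas
section coordsec
variable {Ω : Type*} [m0 : MeasurableSpace Ω] {K : ℕ} {W : Ω → Fin K → ℝ}

lemma coordSigmaIn_eq_biSup (W : Ω → Fin K → ℝ) (S : Finset (Fin K)) :
    coordSigmaIn W S = ⨆ i ∈ S, MeasurableSpace.comap (fun ω => W ω i) inferInstance := by
  have hpi : (inferInstance : MeasurableSpace ({i : Fin K // i ∈ S} → ℝ)) =
      ⨆ a : {i : Fin K // i ∈ S}, MeasurableSpace.comap (fun b => b a) inferInstance := rfl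
  rw [coordSigmaIn, hpi, MeasurableSpace.comap_iSup]
  simp_rw [MeasurableSpace.comap_comp]
  rw [iSup_subtype]
  rfl

lemma coordSigmaIn_le (hW : Measurable W) (S : Finset (Fin K)) :
    coordSigmaIn W S ≤ m0 :=
  Measurable.comap_le (measurable_pi_lambda _ fun i => (measurable_pi_apply (i : Fin K)).comp hW)

lemma coordSigmaIn_mono {S T : Finset (Fin K)} (hST : S ⊆ T) :
    coordSigmaIn W S ≤ coordSigmaIn W T := by
  rw [coordSigmaIn_eq_biSup, coordSigmaIn_eq_biSup]
  exact biSup_mono fun i hi => hST hi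

lemma coordSigmaIn_union (S T : Finset (Fin K)) :
    coordSigmaIn W (S ∪ T) = coordSigmaIn W S ⊔ coordSigmaIn W T := by
  rw [coordSigmaIn_eq_biSup, coordSigmaIn_eq_biSup, coordSigmaIn_eq_biSup]
  refine le_antisymm (iSup₂_le fun i hi => ?_)
    (sup_le (biSup_mono fun i => Finset.mem_union_left _)
      (biSup_mono fun i => Finset.mem_union_right _))
  rcases Finset.mem_union.mp hi with h | h
  · exact le_sup_of_le_left (le_iSup₂ (f := fun (i : Fin K) (_ : i ∈ S) =>
      MeasurableSpace.comap (fun ω => W ω i) inferInstance) i h)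
  · exact le_sup_of_le_right (le_iSup₂ (f := fun (i : Fin K) (_ : i ∈ T) =>
      MeasurableSpace.comap (fun ω => W ω i) inferInstance) i h)

lemma indep_coordSigmaIn {μ : Measure Ω} [IsProbabilityMeasure μ] (hW : Measurable W)
    (hiW : iIndepFun (m := fun _ : Fin K => (inferInstance : MeasurableSpace ℝ))
      (fun i ω => W ω i) μ)
    {S T : Finset (Fin K)} (hST : Disjoint S T) :
    Indep (coordSigmaIn W S) (coordSigmaIn W T) μ := by
  rw [coordSigmaIn_eq_biSup, coordSigmaIn_eq_biSup]
  have h := indep_iSup_of_disjoint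
    (m := fun i : Fin K => MeasurableSpace.comap (fun ω => W ω i) inferInstance)
    (fun i => ((measurable_pi_apply i).comp hW).comap_le) hiW.iIndep
    (S := (S : Set (Fin K))) (T := (T : Set (Fin K))) (Finset.disjoint_coe.mpr hST)
  simpa using h

end coordsec

section main
variable {Ω : Type*} [m0 : MeasurableSpace Ω] {μ : Measure Ω} [IsProbabilityMeasure μ]
  {K : ℕ} {W : Ω → Fin K → ℝ} {f : (Fin K → ℝ) → ℝ}

omit [IsProbabilityMeasure μ] in
lemma anova_sm (S : Finset (Fin K)) :
    StronglyMeasurable[coordSigmaIn W S] (anovaComp μ W f S) := by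
  rw [anovaComp]; exact stronglyMeasurable_condExp

lemma anova_memL2 (hW : Measurable W) (hL2 : MemLp (fun ω => f (W ω)) 2 μ)
    (S : Finset (Fin K)) : MemLp (anovaComp μ W f S) 2 μ := by
  induction S using Finset.strongInduction with
  | _ S ih =>
    rw [anovaComp]
    refine memL2_condexp (coordSigmaIn_le hW S)
      (MemLp.sub hL2 (memLp_finsetSum _ fun S' _ => ?_))
    have h1 := Finset.mem_erase.mp S'.2
    exact ih S'.1 (lt_of_le_of_ne (Finset.mem_powerset.mp h1.2) h1.1)

lemma condexp_f_eq (hW : Measurable W) (hL2 : MemLp (fun ω => f (W ω)) 2 μ)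
    (R : Finset (Fin K)) :
    μ[(fun ω => f (W ω)) | coordSigmaIn W R] =ᵐ[μ]
      fun ω => ∑ S' ∈ R.powerset, anovaComp μ W f S' ω := by
  have hfi : Integrable (fun ω => f (W ω)) μ := hL2.integrable one_le_two
  have hint : ∀ S' : Finset (Fin K), Integrable (anovaComp μ W f S') μ :=
    fun S' => (anova_memL2 hW hL2 S').integrable one_le_two
  have hsum : Integrable
      (fun ω => ∑ S' ∈ (R.powerset.erase R).attach, anovaComp μ W f S'.1 ω) μ :=
    integrable_finset_sum _ fun S' _ => hint S'.1
  have h1 : anovaComp μ W f R =ᵐ[μ]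
      μ[(fun ω => f (W ω)) | coordSigmaIn W R] -
      μ[(fun ω => ∑ S' ∈ (R.powerset.erase R).attach, anovaComp μ W f S'.1 ω) |
        coordSigmaIn W R] := by
    rw [anovaComp]
    exact condExp_sub hfi hsum _
  have h2 : μ[(fun ω => ∑ S' ∈ (R.powerset.erase R).attach, anovaComp μ W f S'.1 ω) |
      coordSigmaIn W R]
      = fun ω => ∑ S' ∈ (R.powerset.erase R).attach, anovaComp μ W f S'.1 ω := by
    refine condExp_of_stronglyMeasurable (coordSigmaIn_le hW R) ?_ hsum
    refine Finset.stronglyMeasurable_fun_sum _ fun S' _ => ?_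
    have h1 := Finset.mem_erase.mp S'.2
    exact (anova_sm S'.1).mono (coordSigmaIn_mono (Finset.mem_powerset.mp h1.2))
  have h3 : μ[(fun ω => f (W ω)) | coordSigmaIn W R] =ᵐ[μ]
      fun ω => anovaComp μ W f R ω +
        ∑ S' ∈ (R.powerset.erase R).attach, anovaComp μ W f S'.1 ω := by
    filter_upwards [h1] with ω hω
    have h2' := congrFun h2 ω
    simp only [Pi.sub_apply] at hω
    linarith
  refine h3.trans (Filter.Eventually.of_forall fun ω => ?_)
  dsimp only
  rw [Finset.sum_attach (R.powerset.erase R) (fun S'' => anovaComp μ W f S'' ω)]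
  exact Finset.add_sum_erase R.powerset (fun u => anovaComp μ W f u ω)
    (Finset.mem_powerset_self R)

lemma condexp_anova_zero (hW : Measurable W)
    (hiW : iIndepFun (m := fun _ : Fin K => (inferInstance : MeasurableSpace ℝ))
      (fun i ω => W ω i) μ)
    (hL2 : MemLp (fun ω => f (W ω)) 2 μ) :
    ∀ (n : ℕ) (S T : Finset (Fin K)), S.card < n → ¬ S ⊆ T →
    μ[anovaComp μ W f S | coordSigmaIn W T] =ᵐ[μ] 0 := by
  intro n
  induction n with
  | zero => exact fun S T h _ => absurd h (Nat.not_lt_zero _)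
  | succ n ih =>
    intro S T hcard hST
    have hfi : Integrable (fun ω => f (W ω)) μ := hL2.integrable one_le_two
    have hint : ∀ S' : Finset (Fin K), Integrable (anovaComp μ W f S') μ :=
      fun S' => (anova_memL2 hW hL2 S').integrable one_le_two
    set R := S ∩ T with hR
    have hRS : R ⊆ S := Finset.inter_subset_left
    have hRneS : R ≠ S := fun h => hST (Finset.inter_eq_left.mp h)
    have hsumS : Integrable
        (fun ω => ∑ S' ∈ (S.powerset.erase S).attach, anovaComp μ W f S'.1 ω) μ :=
      integrable_finset_sum _ fun S' _ => hint S'.1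
    have h1 : μ[anovaComp μ W f S | coordSigmaIn W T] =ᵐ[μ]
        μ[anovaComp μ W f S | coordSigmaIn W R] := by
      have hTsplit : T = R ∪ (T \ S) := by
        ext i; simp only [hR, Finset.mem_union, Finset.mem_inter, Finset.mem_sdiff]; tauto
      have hsplit : coordSigmaIn W T = coordSigmaIn W R ⊔ coordSigmaIn W (T \ S) := by
        conv_lhs => rw [hTsplit]
        exact coordSigmaIn_union R (T \ S)
      rw [hsplit]
      exact condexp_indep_sup (coordSigmaIn_le hW S) (coordSigmaIn_le hW (T \ S))
        (coordSigmaIn_mono hRS) (indep_coordSigmaIn hW hiW Finset.disjoint_sdiff)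
        (hint S) (anova_sm S)
    have h2 : μ[anovaComp μ W f S | coordSigmaIn W R] =ᵐ[μ]
        μ[(fun ω => f (W ω) -
          ∑ S' ∈ (S.powerset.erase S).attach, anovaComp μ W f S'.1 ω) | coordSigmaIn W R] := by
      conv_lhs => rw [anovaComp]
      exact condExp_condExp_of_le (coordSigmaIn_mono hRS) (coordSigmaIn_le hW S)
    have h3 : μ[(fun ω => f (W ω) -
          ∑ S' ∈ (S.powerset.erase S).attach, anovaComp μ W f S'.1 ω) | coordSigmaIn W R]
        =ᵐ[μ] μ[(fun ω => f (W ω)) | coordSigmaIn W R] -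
          μ[(fun ω => ∑ S' ∈ (S.powerset.erase S).attach, anovaComp μ W f S'.1 ω) |
            coordSigmaIn W R] :=
      condExp_sub hfi hsumS _
    have h4 := condexp_f_eq hW hL2 R
    have hfun : (fun ω => ∑ S' ∈ (S.powerset.erase S).attach, anovaComp μ W f S'.1 ω)
        = ∑ S' ∈ (S.powerset.erase S).attach, anovaComp μ W f S'.1 := by
      funext ω; simp
    have h5 : μ[(fun ω => ∑ S' ∈ (S.powerset.erase S).attach, anovaComp μ W f S'.1 ω) |
        coordSigmaIn W R] =ᵐ[μ]
        ∑ S' ∈ (S.powerset.erase S).attach, μ[anovaComp μ W f S'.1 | coordSigmaIn W R] := by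
      rw [hfun]
      exact condExp_finsetSum (fun S' _ => hint S'.1) _
    have h6 : ∀ᵐ ω ∂μ, ∑ S' ∈ (S.powerset.erase S).attach,
        (μ[anovaComp μ W f S'.1 | coordSigmaIn W R]) ω
        = ∑ S'' ∈ R.powerset, anovaComp μ W f S'' ω := by
      have hz : ∀ᵐ ω ∂μ, ∀ S' : {x // x ∈ S.powerset.erase S},
          (μ[anovaComp μ W f S'.1 | coordSigmaIn W R]) ω =
          (if S'.1 ⊆ R then anovaComp μ W f S'.1 ω else 0) := by
        rw [ae_all_iff]
        intro S'
        have hmem := Finset.mem_erase.mp S'.2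
        have hsub : S'.1 ⊂ S := lt_of_le_of_ne (Finset.mem_powerset.mp hmem.2) hmem.1
        by_cases hc : S'.1 ⊆ R
        · simp only [hc, if_true]
          have := condExp_of_stronglyMeasurable (coordSigmaIn_le hW R)
            ((anova_sm S'.1).mono (coordSigmaIn_mono hc)) (hint S'.1)
          exact Filter.Eventually.of_forall fun ω => congrFun this ω
        · simp only [hc, if_false]
          have hcard' : S'.1.card < n := by
            have := Finset.card_lt_card hsub
            omega
          exact ih S'.1 R hcard' hc
      filter_upwards [hz] with ω hω
      rw [Finset.sum_congr rfl fun S' _ => hω S',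
        Finset.sum_attach (S.powerset.erase S)
          (fun S'' => if S'' ⊆ R then anovaComp μ W f S'' ω else 0),
        ← Finset.sum_filter]
      congr 1
      ext u
      simp only [Finset.mem_filter, Finset.mem_erase, Finset.mem_powerset]
      constructor
      · tauto
      · intro hu
        refine ⟨⟨?_, hu.trans hRS⟩, hu⟩
        rintro rfl
        exact hRneS (Finset.Subset.antisymm hRS hu)
    filter_upwards [h1, h2, h3, h4, h5, h6] with ω e1 e2 e3 e4 e5 e6
    simp only [Pi.sub_apply, Finset.sum_apply, Pi.zero_apply] at *
    rw [e1, e2, e3, e4, e5]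
    rw [e6]
    ring
end main

/-- Hoeffding orthogonality: distinct ANOVA components are orthogonal in `L²`. -/
theorem stmt8 {Ω : Type*} [MeasurableSpace Ω] (μ : Measure Ω) [IsProbabilityMeasure μ]
    {K : ℕ} (W : Ω → Fin K → ℝ) (hW : Measurable W)
    (hiW : iIndepFun (m := fun _ : Fin K => (inferInstance : MeasurableSpace ℝ))
      (fun i ω => W ω i) μ)
    (hWL2 : ∀ i, MemLp (fun ω => W ω i) 2 μ)
    (f : (Fin K → ℝ) → ℝ) (hf : Measurable f)
    (hL2 : MemLp (fun ω => f (W ω)) 2 μ)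
    (S S' : Finset (Fin K)) (hne : S ≠ S') :
    ∫ ω, anovaComp μ W f S ω * anovaComp μ W f S' ω ∂μ = 0 := by
  have key : ∀ A B : Finset (Fin K), ¬ A ⊆ B →
      ∫ ω, anovaComp μ W f A ω * anovaComp μ W f B ω ∂μ = 0 := by
    intro A B hAB
    have hprod : Integrable (anovaComp μ W f B * anovaComp μ W f A) μ :=
      memL2_integrable_mul (anova_memL2 hW hL2 B) (anova_memL2 hW hL2 A)
    have h0 : μ[anovaComp μ W f A | coordSigmaIn W B] =ᵐ[μ] 0 :=
      condexp_anova_zero hW hiW hL2 (A.card + 1) A B (Nat.lt_succ_self _) hAB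
    have h1 : μ[anovaComp μ W f B * anovaComp μ W f A | coordSigmaIn W B] =ᵐ[μ]
        anovaComp μ W f B * μ[anovaComp μ W f A | coordSigmaIn W B] :=
      condExp_mul_of_stronglyMeasurable_left (anova_sm B) hprod
        ((anova_memL2 hW hL2 A).integrable one_le_two)
    have h2 : ∫ ω, (anovaComp μ W f B * anovaComp μ W f A) ω ∂μ =
        ∫ ω, (μ[anovaComp μ W f B * anovaComp μ W f A | coordSigmaIn W B]) ω ∂μ :=
      (integral_condExp (coordSigmaIn_le hW B)).symm
    have h3 : μ[anovaComp μ W f B * anovaComp μ W f A | coordSigmaIn W B] =ᵐ[μ] 0 := by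
      refine h1.trans ?_
      filter_upwards [h0] with ω hω
      simp only [Pi.mul_apply, Pi.zero_apply] at *
      rw [hω, mul_zero]
    calc ∫ ω, anovaComp μ W f A ω * anovaComp μ W f B ω ∂μ
        = ∫ ω, (anovaComp μ W f B * anovaComp μ W f A) ω ∂μ := by
          refine integral_congr_ae (Filter.Eventually.of_forall fun ω => ?_)
          simp [mul_comm]
      _ = ∫ ω, (μ[anovaComp μ W f B * anovaComp μ W f A | coordSigmaIn W B]) ω ∂μ := h2
      _ = 0 := by
          rw [integral_congr_ae h3]
          simp
  by_cases h : S ⊆ S'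
  · have h' : ¬ S' ⊆ S := fun h2 => hne (Finset.Subset.antisymm h h2)
    calc ∫ ω, anovaComp μ W f S ω * anovaComp μ W f S' ω ∂μ
        = ∫ ω, anovaComp μ W f S' ω * anovaComp μ W f S ω ∂μ := by
          refine integral_congr_ae (Filter.Eventually.of_forall fun ω => ?_)
          simp [mul_comm]
      _ = 0 := key S' S h'
  · exact key S S' h
end

section
/- Consider the comonotone structural model W1 = E1, Y = W1 + E2, where E1, E2 are independent Rademacher variables, versus the non-comonotone model W1 = E1, Y = W1 + W1*E2 = W1(1 + E2). In both models the joint distribution of (W1, Y) is identical, but the counterfactual explainability of W1, defined as Var(Y(W1) - Y(W1'))/(2 Var(Y)) with W1' an independent copy of W1 and the potential outcomes Y(w1) given by w1 + E2 and w1 + w1*E2 respectively, equals 1/2 in the first model and 1 in the second. -/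
open MeasureTheory ProbabilityTheory
open scoped ENNReal

section aux

variable {Ω : Type*} [MeasurableSpace Ω] {μ : Measure Ω} {ι : Type*} [Fintype ι]
  {A : ι → Set Ω}

lemma ae_mem_union' (hnull : μ (⋃ i, A i)ᶜ = 0) : ∀ᵐ ω ∂μ, ω ∈ ⋃ i, A i := by
  exact mem_ae_iff.mpr hnull

lemma integral_of_partition [IsFiniteMeasure μ]
    (hmeas : ∀ i, MeasurableSet (A i)) (hdisj : Pairwise (Function.onFun Disjoint A))
    (hnull : μ (⋃ i, A i)ᶜ = 0) {X : Ω → ℝ} {c : ι → ℝ}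
    (hX : ∀ i, ∀ ω ∈ A i, X ω = c i) :
    ∫ ω, X ω ∂μ = ∑ i, c i * (μ (A i)).toReal := by
  have heq : X =ᵐ[μ] fun ω => ∑ i, (A i).indicator (fun _ => c i) ω := by
    filter_upwards [ae_mem_union' hnull] with ω hω
    obtain ⟨j, hj⟩ := Set.mem_iUnion.mp hω
    rw [hX j ω hj, Finset.sum_eq_single j]
    · simp [Set.indicator_of_mem hj]
    · intro i _ hij
      exact Set.indicator_of_notMem
        (fun hmem => Set.disjoint_left.mp (hdisj hij) hmem hj) _
    · simp
  rw [integral_congr_ae heq, integral_finset_sum]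
  · refine Finset.sum_congr rfl fun i _ => ?_
    rw [integral_indicator_const _ (hmeas i), smul_eq_mul, mul_comm]
    rfl
  · exact fun i _ => (integrable_const (c i)).indicator (hmeas i)

open scoped Classical in
lemma measure_preimage_of_partition {α : Type*} [MeasurableSpace α]
    (hmeas : ∀ i, MeasurableSet (A i)) (hdisj : Pairwise (Function.onFun Disjoint A))
    (hnull : μ (⋃ i, A i)ᶜ = 0) {X : Ω → α} (hXm : Measurable X) {c : ι → α}
    (hX : ∀ i, ∀ ω ∈ A i, X ω = c i) {s : Set α} (hs : MeasurableSet s) :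
    μ (X ⁻¹' s) = ∑ i, if c i ∈ s then μ (A i) else 0 := by
  rw [← measure_inter_conull hnull, Set.inter_iUnion, measure_iUnion, tsum_fintype]
  · refine Finset.sum_congr rfl fun i _ => ?_
    by_cases h : c i ∈ s
    · rw [if_pos h]
      congr 1
      exact Set.inter_eq_self_of_subset_right fun ω hω => by
        simp only [Set.mem_preimage, hX i ω hω]; exact h
    · rw [if_neg h]
      convert measure_empty (μ := μ)
      ext ω
      simp only [Set.mem_inter_iff, Set.mem_preimage, Set.mem_empty_iff_false, iff_false]
      rintro ⟨h1, h2⟩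
      exact h (hX i ω h2 ▸ h1)
  · exact hdisj.mono fun i j h => h.mono Set.inter_subset_right Set.inter_subset_right
  · exact fun i => (hXm hs).inter (hmeas i)

lemma memLp_of_partition [IsFiniteMeasure μ]
    (hnull : μ (⋃ i, A i)ᶜ = 0) {X : Ω → ℝ} (hXm : AEStronglyMeasurable X μ)
    {c : ι → ℝ} (hX : ∀ i, ∀ ω ∈ A i, X ω = c i) {C : ℝ} (hC : ∀ i, |c i| ≤ C) :
    MemLp X 2 μ := by
  refine MemLp.of_bound hXm C ?_
  filter_upwards [ae_mem_union' hnull] with ω hω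
  obtain ⟨j, hj⟩ := Set.mem_iUnion.mp hω
  rw [Real.norm_eq_abs, hX j ω hj]
  exact hC j

end aux

/-- helper value map -/
def vB : Bool → ℝ
  | true => 1
  | false => -1


/-- A Rademacher random variable takes values -1 and 1 with probability 1/2 each. -/
def IsRademacher {Ω : Type*} [MeasurableSpace Ω] (μ : Measure Ω) (X : Ω → ℝ) : Prop :=
  μ {ω | X ω = 1} = 1/2 ∧ μ {ω | X ω = -1} = 1/2

/-- Non-identifiability of counterfactual explainability: the comonotone model
`Y = W1 + E2` and the non-comonotone model `Y = W1(1 + E2)` induce the same joint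
distribution of `(W1, Y)`, but the counterfactual explainability of `W1`,
`Var(Y(W1) - Y(W1')) / (2 Var(Y))`, equals `1/2` in the first model and `1` in the
second. -/
theorem stmt18 {Ω : Type*} [MeasurableSpace Ω] (μ : Measure Ω) [IsProbabilityMeasure μ]
    (E1 E2 W1' : Ω → ℝ) (hE1 : Measurable E1) (hE2 : Measurable E2)
    (hW1' : Measurable W1')
    (hR1 : IsRademacher μ E1) (hR2 : IsRademacher μ E2)
    (hindep : IndepFun E1 E2 μ)
    (W1 : Ω → ℝ) (hW1 : W1 = E1)
    (hcopy : μ.map W1' = μ.map W1)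
    (hindep' : IndepFun (fun ω => (W1 ω, E2 ω)) W1' μ)
    (Y1 Y2 : Ω → ℝ)
    (hY1 : Y1 = fun ω => W1 ω + E2 ω)
    (hY2 : Y2 = fun ω => W1 ω * (1 + E2 ω)) :
    μ.map (fun ω => (W1 ω, Y1 ω)) = μ.map (fun ω => (W1 ω, Y2 ω)) ∧
    variance (fun ω => (W1 ω + E2 ω) - (W1' ω + E2 ω)) μ / (2 * variance Y1 μ) = 1/2 ∧
    variance (fun ω => W1 ω * (1 + E2 ω) - W1' ω * (1 + E2 ω)) μ
      / (2 * variance Y2 μ) = 1 := by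
  subst hW1 hY1 hY2
  -- the value map
  let v := vB
  have hvinj : Function.Injective v := by
    intro a b hab
    cases a <;> cases b <;> simp [v, vB] at hab ⊢ <;> norm_num at hab
  -- the atoms
  set A : Bool × Bool × Bool → Set Ω :=
    fun b => (W1 ⁻¹' {v b.1} ∩ E2 ⁻¹' {v b.2.1}) ∩ W1' ⁻¹' {v b.2.2} with hA
  have hmeasA : ∀ b, MeasurableSet (A b) := fun b =>
    ((hE1 (measurableSet_singleton _)).inter (hE2 (measurableSet_singleton _))).inter
      (hW1' (measurableSet_singleton _))
  have hdisj : Pairwise (Function.onFun Disjoint A) := by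
    intro b b' hne
    refine Set.disjoint_left.mpr ?_
    rintro ω ⟨⟨h1, h2⟩, h3⟩ ⟨⟨h1', h2'⟩, h3'⟩
    simp only [Set.mem_preimage, Set.mem_singleton_iff] at h1 h2 h3 h1' h2' h3'
    exact hne (Prod.ext (hvinj (h1 ▸ h1')) (Prod.ext (hvinj (h2 ▸ h2')) (hvinj (h3 ▸ h3'))))
  -- measures of coordinate events
  have hE1v : ∀ x : Bool, μ (W1 ⁻¹' {v x}) = 1/2 := by
    intro x
    cases x
    · exact hR1.2
    · exact hR1.1
  have hE2v : ∀ x : Bool, μ (E2 ⁻¹' {v x}) = 1/2 := by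
    intro x
    cases x
    · exact hR2.2
    · exact hR2.1
  have hW1'v : ∀ x : Bool, μ (W1' ⁻¹' {v x}) = 1/2 := by
    intro x
    have h1 : μ (W1' ⁻¹' {v x}) = μ.map W1' {v x} :=
      (Measure.map_apply hW1' (measurableSet_singleton _)).symm
    rw [h1, hcopy, Measure.map_apply hE1 (measurableSet_singleton _)]
    exact hE1v x
  -- the atoms have measure 1/8
  have hpre : ∀ b : Bool × Bool × Bool,
      (fun ω => (W1 ω, E2 ω)) ⁻¹' {(v b.1, v b.2.1)} = W1 ⁻¹' {v b.1} ∩ E2 ⁻¹' {v b.2.1} := by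
    intro b
    ext ω
    simp [Prod.ext_iff]
  have hA8 : ∀ b, μ (A b) = 1/8 := by
    intro b
    have h2 := hindep'.measure_inter_preimage_eq_mul {(v b.1, v b.2.1)} {v b.2.2}
      (measurableSet_singleton _) (measurableSet_singleton _)
    rw [hpre b] at h2
    have h3 := hindep.measure_inter_preimage_eq_mul {v b.1} {v b.2.1}
      (measurableSet_singleton _) (measurableSet_singleton _)
    rw [hA]
    rw [h2, h3, hE1v, hE2v, hW1'v]
    rw [show (1/2 : ℝ≥0∞) = 2⁻¹ by norm_num, ← ENNReal.mul_inv (by norm_num) (by norm_num),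
      ← ENNReal.mul_inv (by norm_num) (by norm_num)]
    norm_num
  -- complement of the union is null
  have hfull : ∀ (X : Ω → ℝ), Measurable X → (∀ x : Bool, μ (X ⁻¹' {v x}) = 1/2) →
      μ (X ⁻¹' {v true} ∪ X ⁻¹' {v false})ᶜ = 0 := by
    intro X hX hXv
    rw [prob_compl_eq_zero_iff ((hX (measurableSet_singleton _)).union
      (hX (measurableSet_singleton _)))]
    rw [measure_union ?_ (hX (measurableSet_singleton _)), hXv, hXv]
    · rw [show (1/2 : ℝ≥0∞) = 2⁻¹ by norm_num, ENNReal.inv_two_add_inv_two]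
    · refine Set.disjoint_left.mpr ?_
      intro ω h1 h2
      simp only [Set.mem_preimage, Set.mem_singleton_iff] at h1 h2
      exact absurd (hvinj (h1 ▸ h2)) (by simp)
  have hnull : μ (⋃ b, A b)ᶜ = 0 := by
    have hsub2 : (W1 ⁻¹' {v true} ∪ W1 ⁻¹' {v false}) ∩
        ((E2 ⁻¹' {v true} ∪ E2 ⁻¹' {v false}) ∩
          (W1' ⁻¹' {v true} ∪ W1' ⁻¹' {v false})) ⊆ ⋃ b, A b := by
      rintro ω ⟨h1, h2, h3⟩
      obtain ⟨b1, hb1⟩ : ∃ b, W1 ω = v b :=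
        h1.elim (fun h => ⟨true, by simpa using h⟩) (fun h => ⟨false, by simpa using h⟩)
      obtain ⟨b2, hb2⟩ : ∃ b, E2 ω = v b :=
        h2.elim (fun h => ⟨true, by simpa using h⟩) (fun h => ⟨false, by simpa using h⟩)
      obtain ⟨b3, hb3⟩ : ∃ b, W1' ω = v b :=
        h3.elim (fun h => ⟨true, by simpa using h⟩) (fun h => ⟨false, by simpa using h⟩)
      exact Set.mem_iUnion.mpr ⟨(b1, b2, b3), ⟨⟨hb1, hb2⟩, hb3⟩⟩
    have hz : μ ((W1 ⁻¹' {v true} ∪ W1 ⁻¹' {v false}) ∩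
        ((E2 ⁻¹' {v true} ∪ E2 ⁻¹' {v false}) ∩
          (W1' ⁻¹' {v true} ∪ W1' ⁻¹' {v false})))ᶜ = 0 := by
      rw [Set.compl_inter, Set.compl_inter, measure_union_null_iff]
      refine ⟨hfull W1 hE1 hE1v, ?_⟩
      rw [measure_union_null_iff]
      exact ⟨hfull E2 hE2 hE2v, hfull W1' hW1' hW1'v⟩
    exact measure_mono_null (Set.compl_subset_compl.mpr hsub2) hz
  -- generic integral computation
  have hint : ∀ (X : Ω → ℝ) (c : Bool × Bool × Bool → ℝ),
      (∀ b, ∀ ω ∈ A b, X ω = c b) →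
      ∫ ω, X ω ∂μ = (1/8) * ∑ b : Bool × Bool × Bool, c b := by
    intro X c hc
    rw [integral_of_partition hmeasA hdisj hnull hc]
    rw [Finset.mul_sum]
    refine Finset.sum_congr rfl fun b _ => ?_
    rw [hA8 b]
    rw [show ((1/8 : ℝ≥0∞)).toReal = 1/8 by simp]
    ring
  -- part 1: equality of joint distributions
  have hmemA : ∀ b : Bool × Bool × Bool, ∀ ω ∈ A b,
      W1 ω = v b.1 ∧ E2 ω = v b.2.1 ∧ W1' ω = v b.2.2 := by
    rintro b ω ⟨⟨h1, h2⟩, h3⟩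
    exact ⟨h1, h2, h3⟩
  have part1 : μ.map (fun ω => (W1 ω, W1 ω + E2 ω)) =
      μ.map (fun ω => (W1 ω, W1 ω * (1 + E2 ω))) := by
    refine Measure.ext fun s hs => ?_
    rw [Measure.map_apply (f := fun ω => (W1 ω, W1 ω + E2 ω)) (hE1.prodMk (hE1.add hE2)) hs,
      Measure.map_apply (f := fun ω => (W1 ω, W1 ω * (1 + E2 ω))) (hE1.prodMk (hE1.mul (measurable_const.add hE2))) hs]
    rw [measure_preimage_of_partition hmeasA hdisj hnull (X := fun ω => (W1 ω, W1 ω + E2 ω)) (hE1.prodMk (hE1.add hE2))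
      (c := fun b => (v b.1, v b.1 + v b.2.1)) ?_ hs,
      measure_preimage_of_partition hmeasA hdisj hnull (X := fun ω => (W1 ω, W1 ω * (1 + E2 ω)))
        (hE1.prodMk (hE1.mul (measurable_const.add hE2)))
      (c := fun b => (v b.1, v b.1 * (1 + v b.2.1))) ?_ hs]
    · have m1 : ((((1:ℝ)), (1:ℝ) + 1) ∈ s) = ((((1:ℝ)), (2:ℝ)) ∈ s) := by norm_num
      have m2 : ((((1:ℝ)), (1:ℝ) + -1) ∈ s) = ((((1:ℝ)), (0:ℝ)) ∈ s) := by norm_num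
      have m3 : ((((-1:ℝ)), (-1:ℝ) + 1) ∈ s) = ((((-1:ℝ)), (0:ℝ)) ∈ s) := by norm_num
      have m4 : ((((-1:ℝ)), (-1:ℝ) + -1) ∈ s) = ((((-1:ℝ)), (-2:ℝ)) ∈ s) := by norm_num
      have m5 : ((((1:ℝ)), (1:ℝ) * (1 + 1)) ∈ s) = ((((1:ℝ)), (2:ℝ)) ∈ s) := by norm_num
      have m6 : ((((1:ℝ)), (1:ℝ) * (1 + -1)) ∈ s) = ((((1:ℝ)), (0:ℝ)) ∈ s) := by norm_num
      have m7 : ((((-1:ℝ)), (-1:ℝ) * (1 + 1)) ∈ s) = ((((-1:ℝ)), (-2:ℝ)) ∈ s) := by norm_num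
      have m8 : ((((-1:ℝ)), (-1:ℝ) * (1 + -1)) ∈ s) = ((((-1:ℝ)), (0:ℝ)) ∈ s) := by norm_num
      have hvt : v true = 1 := rfl
      have hvf : v false = -1 := rfl
      classical
      simp only [hA8, Fintype.sum_prod_type, Fintype.sum_bool, hvt, hvf]
      simp only [m1, m2, m3, m4, m5, m6, m7, m8]
      ring
    · intro b ω hω
      obtain ⟨h1, h2, h3⟩ := hmemA b ω hω
      simp [h1, h2]
    · intro b ω hω
      obtain ⟨h1, h2, h3⟩ := hmemA b ω hω
      simp [h1, h2]
  -- variances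
  have hvarcalc : ∀ (X : Ω → ℝ), Measurable X → ∀ (c : Bool × Bool × Bool → ℝ),
      (∀ b, ∀ ω ∈ A b, X ω = c b) → (∀ b, |c b| ≤ 4) →
      variance X μ = (1/8) * (∑ b : Bool × Bool × Bool, (c b)^2)
        - ((1/8) * ∑ b : Bool × Bool × Bool, c b)^2 := by
    intro X hXm c hc hbd
    have hmem : MemLp X 2 μ := memLp_of_partition hnull hXm.aestronglyMeasurable hc hbd
    rw [variance_eq_sub hmem]
    have h1 : μ[X ^ 2] = ∫ ω, (X ω)^2 ∂μ := by
      congr 1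
    rw [h1, hint (fun ω => (X ω)^2) (fun b => (c b)^2) (fun b ω hω => by rw [hc b ω hω]),
      hint X c hc]
  constructor
  · exact part1
  have hvar1 : variance (fun ω => (W1 ω + E2 ω) - (W1' ω + E2 ω)) μ = 2 := by
    rw [hvarcalc (fun ω => (W1 ω + E2 ω) - (W1' ω + E2 ω)) ((hE1.add hE2).sub (hW1'.add hE2))
      (fun b => (v b.1 + v b.2.1) - (v b.2.2 + v b.2.1))
      (fun b ω hω => by obtain ⟨h1, h2, h3⟩ := hmemA b ω hω; simp [h1, h2, h3])
      (fun b => by rcases b with ⟨_|_, _|_, _|_⟩ <;> simp [v, vB] <;> norm_num)]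
    simp only [Fintype.sum_prod_type, Fintype.sum_bool, v, vB]
    norm_num
  have hvarY1 : variance (fun ω => W1 ω + E2 ω) μ = 2 := by
    rw [hvarcalc (fun ω => W1 ω + E2 ω) (hE1.add hE2) (fun b => v b.1 + v b.2.1)
      (fun b ω hω => by obtain ⟨h1, h2, h3⟩ := hmemA b ω hω; simp [h1, h2])
      (fun b => by rcases b with ⟨_|_, _|_, _|_⟩ <;> simp [v, vB] <;> norm_num)]
    simp only [Fintype.sum_prod_type, Fintype.sum_bool, v, vB]
    norm_num
  have hvar2 : variance (fun ω => W1 ω * (1 + E2 ω) - W1' ω * (1 + E2 ω)) μ = 4 := by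
    rw [hvarcalc (fun ω => W1 ω * (1 + E2 ω) - W1' ω * (1 + E2 ω)) ((hE1.mul (measurable_const.add hE2)).sub
        (hW1'.mul (measurable_const.add hE2)))
      (fun b => v b.1 * (1 + v b.2.1) - v b.2.2 * (1 + v b.2.1))
      (fun b ω hω => by obtain ⟨h1, h2, h3⟩ := hmemA b ω hω; simp [h1, h2, h3])
      (fun b => by rcases b with ⟨_|_, _|_, _|_⟩ <;> simp [v, vB] <;> norm_num)]
    simp only [Fintype.sum_prod_type, Fintype.sum_bool, v, vB]
    norm_num
  have hvarY2 : variance (fun ω => W1 ω * (1 + E2 ω)) μ = 2 := by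
    rw [hvarcalc (fun ω => W1 ω * (1 + E2 ω)) (hE1.mul (measurable_const.add hE2)) (fun b => v b.1 * (1 + v b.2.1))
      (fun b ω hω => by obtain ⟨h1, h2, h3⟩ := hmemA b ω hω; simp [h1, h2])
      (fun b => by rcases b with ⟨_|_, _|_, _|_⟩ <;> simp [v, vB] <;> norm_num)]
    simp only [Fintype.sum_prod_type, Fintype.sum_bool, v, vB]
    norm_num
  rw [hvar1, hvarY1, hvar2, hvarY2]
  norm_num
end
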